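/- arXiv:1805.07541 — 2 statements merged into one kernel-verified Lean document; each statement's English description precedes it below -/
import Mathlib

section
/- Let W be a real d×m matrix and Ω an m×m real symmetric positive definite matrix. Let μ₁(W) ≥ μ₂(W) ≥ … ≥ μₘ(W) denote the singular values of W in decreasing order and μ₁(Ω) ≥ … ≥ μₘ(Ω) the eigenvalues of Ω in decreasing order. Then tr(Ω⁻¹ WᵀW) ≥ Σᵢ₌₁^m μᵢ(W)² / μᵢ(Ω). -/
open Matrix

/-- `Wᵀ * W` is Hermitian (symmetric) for a real matrix `W`. -/
lemma isHermitian_transpose_mul {d m : ℕ} (W : Matrix (Fin d) (Fin m) ℝ) :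
    (Wᵀ * W).IsHermitian := by
  simpa using Matrix.isHermitian_conjTranspose_mul_self W

/-- The singular values of a real `d × m` matrix `W`: the square roots of the
eigenvalues of the symmetric positive semidefinite matrix `Wᵀ * W`. -/
noncomputable def singVal {d m : ℕ} (W : Matrix (Fin d) (Fin m) ℝ) (i : Fin m) : ℝ :=
  Real.sqrt ((isHermitian_transpose_mul W).eigenvalues i)

/-- The real power `A ^ p` of a (symmetric) matrix, defined through the spectral
decomposition, i.e. by applying `t ↦ t ^ p` to the eigenvalues (continuous functional
calculus). -/
noncomputable def mpow {m : ℕ} (A : Matrix (Fin m) (Fin m) ℝ) (p : ℝ) :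
    Matrix (Fin m) (Fin m) ℝ :=
  cfc (fun t : ℝ => t ^ p) A

/-- Abel summation positivity over ℕ: if `f` is monotone nonnegative and all tail sums
of `x` are nonnegative, then `∑ f i * x i ≥ 0`. -/
lemma abel_nonneg' (m : ℕ) (f x : ℕ → ℝ) (hf : Monotone f) (hf0 : 0 ≤ f 0)
    (htail : ∀ k < m, 0 ≤ ∑ i ∈ Finset.Ico k m, x i) :
    0 ≤ ∑ i ∈ Finset.range m, f i * x i := by
  set g : ℕ → ℝ := fun k => if k = 0 then f 0 else f k - f (k - 1) with hg
  have hg0 : ∀ k, 0 ≤ g k := by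
    intro k
    rcases k with _ | k
    · simpa [hg] using hf0
    · simp only [hg, Nat.succ_ne_zero, if_false, Nat.add_sub_cancel]
      exact sub_nonneg.2 (hf (Nat.le_succ k))
  have hfg : ∀ i, f i = ∑ k ∈ Finset.range (i + 1), g k := by
    intro i
    induction i with
    | zero => simp [hg]
    | succ n ih => rw [Finset.sum_range_succ, ← ih]; simp [hg]
  have key : ∑ i ∈ Finset.range m, f i * x i
      = ∑ k ∈ Finset.range m, g k * ∑ i ∈ Finset.Ico k m, x i := by
    have h1 : ∀ i ∈ Finset.range m, f i * x i
        = ∑ k ∈ Finset.range m, (if k ≤ i then g k * x i else 0) := by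
      intro i hi
      rw [Finset.sum_ite, Finset.sum_const_zero, add_zero]
      have : Finset.filter (fun k => k ≤ i) (Finset.range m) = Finset.range (i + 1) := by
        ext k; simp only [Finset.mem_filter, Finset.mem_range, Nat.lt_succ_iff]
        exact ⟨fun h => h.2, fun h => ⟨lt_of_le_of_lt h (Finset.mem_range.1 hi), h⟩⟩
      rw [this, hfg i, Finset.sum_mul]
    rw [Finset.sum_congr rfl h1, Finset.sum_comm]
    refine Finset.sum_congr rfl fun k hk => ?_
    rw [Finset.sum_ite, Finset.sum_const_zero, add_zero, Finset.mul_sum]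
    have : Finset.filter (fun i => k ≤ i) (Finset.range m) = Finset.Ico k m := by
      ext i; simp [Finset.mem_Ico, and_comm]
    rw [this]
  rw [key]
  exact Finset.sum_nonneg fun k hk =>
    mul_nonneg (hg0 k) (htail k (Finset.mem_range.1 hk))

/-- Threshold lemma: a weight vector `s` with entries in `[0,1]` and total mass equal to
the size of a tail gives `∑ a l * s l` at least the sum of the corresponding smallest
values of `a`. -/
lemma threshold_lemma' {m : ℕ} (a : Fin m → ℝ) (σ : Equiv.Perm (Fin m))
    (hanti : Antitone (a ∘ σ)) (k : Fin m) (s : Fin m → ℝ)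
    (hs0 : ∀ l, 0 ≤ s l) (hs1 : ∀ l, s l ≤ 1)
    (hsum : ∑ l, s l = ((Finset.univ.filter fun i : Fin m => k ≤ i)).card) :
    ∑ i ∈ Finset.univ.filter (fun i : Fin m => k ≤ i), a (σ i) ≤ ∑ l, a l * s l := by
  set c := a (σ k) with hc
  have step1 : ∀ l, min (a l - c) 0 + c * s l ≤ a l * s l := by
    intro l
    rcases le_or_gt c (a l) with h | h
    · have : min (a l - c) 0 = 0 := min_eq_right (by linarith)
      rw [this, zero_add]
      exact mul_le_mul_of_nonneg_right h (hs0 l)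
    · have hmin : min (a l - c) 0 = a l - c := min_eq_left (by linarith)
      rw [hmin]
      nlinarith [hs1 l, hs0 l]
  have step2 : ∑ l, (min (a l - c) 0 + c * s l) ≤ ∑ l, a l * s l :=
    Finset.sum_le_sum fun l _ => step1 l
  refine le_trans (le_of_eq ?_) step2
  rw [Finset.sum_add_distrib, ← Finset.mul_sum, hsum]
  have hperm : ∑ l, min (a l - c) 0 = ∑ i, min (a (σ i) - c) 0 :=
    (Equiv.sum_comp σ (fun l => min (a l - c) 0)).symm
  rw [hperm]
  have hsplit : ∑ i, min (a (σ i) - c) 0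
      = ∑ i ∈ Finset.univ.filter (fun i : Fin m => k ≤ i), (a (σ i) - c) := by
    rw [← Finset.sum_filter_add_sum_filter_not Finset.univ (fun i : Fin m => k ≤ i)
      (fun i => min (a (σ i) - c) 0)]
    have h1 : ∀ i ∈ Finset.univ.filter (fun i : Fin m => k ≤ i),
        min (a (σ i) - c) 0 = a (σ i) - c := by
      intro i hi
      have hk : k ≤ i := (Finset.mem_filter.1 hi).2
      have : a (σ i) ≤ c := hanti hk
      exact min_eq_left (by linarith)
    have h2 : ∀ i ∈ Finset.univ.filter (fun i : Fin m => ¬ k ≤ i),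
        min (a (σ i) - c) 0 = 0 := by
      intro i hi
      have hk : i ≤ k := le_of_lt (lt_of_not_ge (Finset.mem_filter.1 hi).2)
      have : c ≤ a (σ i) := hanti hk
      exact min_eq_right (by linarith)
    rw [Finset.sum_congr rfl h1, Finset.sum_congr rfl h2, Finset.sum_const_zero, add_zero]
  rw [hsplit, Finset.sum_sub_distrib, Finset.sum_const, nsmul_eq_mul, mul_comm]
  ring

/-- Real spectral theorem packaged for real symmetric matrices. -/
lemma real_spectral' {m : ℕ} {A : Matrix (Fin m) (Fin m) ℝ} (hA : A.IsHermitian) :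
    ∃ V : Matrix (Fin m) (Fin m) ℝ,
      A = V * diagonal hA.eigenvalues * Vᵀ ∧ Vᵀ * V = 1 ∧ V * Vᵀ = 1 := by
  refine ⟨(hA.eigenvectorUnitary : Matrix (Fin m) (Fin m) ℝ), ?_, ?_, ?_⟩
  · have hspec := hA.spectral_theorem
    simp only [Unitary.conjStarAlgAut_apply, Unitary.coe_star, star_eq_conjTranspose, conjTranspose_eq_transpose_of_trivial] at hspec
    have : (RCLike.ofReal ∘ hA.eigenvalues : Fin m → ℝ) = hA.eigenvalues := by ext i; simp
    rwa [this] at hspec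
  · have h := (Matrix.mem_unitaryGroup_iff').mp hA.eigenvectorUnitary.2
    simpa only [star_eq_conjTranspose, conjTranspose_eq_transpose_of_trivial] using h
  · have h := (Matrix.mem_unitaryGroup_iff).mp hA.eigenvectorUnitary.2
    simpa only [star_eq_conjTranspose, conjTranspose_eq_transpose_of_trivial] using h

/-- Ky Fan type bound: the sum over a subset `S` of diagonal entries of `Uᵀ A U`
is at least the sum of the `|S|` smallest eigenvalues of `A`. -/
lemma kyfan' {m : ℕ} {A : Matrix (Fin m) (Fin m) ℝ} (hA : A.IsHermitian)
    (σ : Equiv.Perm (Fin m)) (hanti : Antitone (hA.eigenvalues ∘ σ))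
    (U : Matrix (Fin m) (Fin m) ℝ) (hU1 : Uᵀ * U = 1) (hU2 : U * Uᵀ = 1)
    (S : Finset (Fin m)) (k : Fin m)
    (hcard : S.card = ((Finset.univ.filter fun i : Fin m => k ≤ i)).card) :
    ∑ i ∈ Finset.univ.filter (fun i : Fin m => k ≤ i), hA.eigenvalues (σ i)
      ≤ ∑ j ∈ S, (Uᵀ * A * U) j j := by
  obtain ⟨V, hspec, hV1, hV2⟩ := real_spectral' hA
  set a := hA.eigenvalues with ha
  set Q := Vᵀ * U with hQ
  have hQ1 : Qᵀ * Q = 1 := by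
    rw [hQ, transpose_mul, transpose_transpose, mul_assoc, ← mul_assoc V, hV2, one_mul, hU1]
  have hQ2 : Q * Qᵀ = 1 := by
    rw [hQ, transpose_mul, transpose_transpose, mul_assoc, ← mul_assoc U, hU2, one_mul, hV1]
  have centry : ∀ j, (Uᵀ * A * U) j j = ∑ l, a l * (Q l j) ^ 2 := by
    intro j
    have hC : Uᵀ * A * U = Qᵀ * diagonal a * Q := by
      rw [hspec, hQ, transpose_mul, transpose_transpose]
      noncomm_ring
    rw [hC, mul_assoc, mul_apply]
    refine Finset.sum_congr rfl fun l _ => ?_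
    rw [transpose_apply, diagonal_mul]
    ring
  set s : Fin m → ℝ := fun l => ∑ j ∈ S, (Q l j) ^ 2 with hs
  have srow : ∀ l, ∑ j, (Q l j) ^ 2 = 1 := by
    intro l
    have : (Q * Qᵀ) l l = ∑ j, Q l j ^ 2 := by
      rw [mul_apply]; exact Finset.sum_congr rfl fun j _ => by rw [transpose_apply]; ring
    rw [← this, hQ2, one_apply_eq]
  have scol : ∀ j, ∑ l, (Q l j) ^ 2 = 1 := by
    intro j
    have : (Qᵀ * Q) j j = ∑ l, Q l j ^ 2 := by
      rw [mul_apply]; exact Finset.sum_congr rfl fun l _ => by rw [transpose_apply]; ring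
    rw [← this, hQ1, one_apply_eq]
  have hs0 : ∀ l, 0 ≤ s l := fun l => Finset.sum_nonneg fun j _ => sq_nonneg _
  have hs1 : ∀ l, s l ≤ 1 := by
    intro l
    rw [← srow l]
    exact Finset.sum_le_sum_of_subset_of_nonneg (Finset.subset_univ S)
      (fun j _ _ => sq_nonneg _)
  have hsum : ∑ l, s l = ((Finset.univ.filter fun i : Fin m => k ≤ i)).card := by
    rw [hs, Finset.sum_comm, ← hcard]
    simp [scol]
  have hrhs : ∑ j ∈ S, (Uᵀ * A * U) j j = ∑ l, a l * s l := by
    rw [Finset.sum_congr rfl fun j _ => centry j, Finset.sum_comm]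
    exact Finset.sum_congr rfl fun l _ => by rw [hs, Finset.mul_sum]
  rw [hrhs]
  exact threshold_lemma' a σ hanti k s hs0 hs1 hsum

/-- von Neumann-type lower bound: if μW is the decreasing rearrangement of
the singular values of W and μΩ the decreasing rearrangement of the eigenvalues of a
symmetric positive definite Ω, then tr(Ω⁻¹ WᵀW) ≥ Σᵢ μW(i)² / μΩ(i). -/
theorem stmt4 {d m : ℕ} (W : Matrix (Fin d) (Fin m) ℝ)
    (Ω : Matrix (Fin m) (Fin m) ℝ) (hΩ : Ω.PosDef)
    (μW μΩ : Fin m → ℝ)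
    (hμW : ∃ σ : Equiv.Perm (Fin m), μW = singVal W ∘ σ) (hWdec : Antitone μW)
    (hμΩ : ∃ σ : Equiv.Perm (Fin m), μΩ = hΩ.isHermitian.eigenvalues ∘ σ)
    (hΩdec : Antitone μΩ) :
    ∑ i, μW i ^ 2 / μΩ i ≤ (Ω⁻¹ * (Wᵀ * W)).trace := by
  obtain ⟨σ, hσ⟩ := hμW
  obtain ⟨τ, hτ⟩ := hμΩ
  set hA := isHermitian_transpose_mul W with hhA
  set a := hA.eigenvalues with ha
  set b := hΩ.isHermitian.eigenvalues with hb
  have hPSD : (Wᵀ * W).PosSemidef := by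
    have := W.posSemidef_conjTranspose_mul_self
    rwa [conjTranspose_eq_transpose_of_trivial] at this
  have hanonneg : ∀ j, 0 ≤ a j := fun j => hPSD.eigenvalues_nonneg j
  have hbpos : ∀ j, 0 < b j := fun j => hΩ.eigenvalues_pos j
  have hsq : ∀ i, μW i ^ 2 = a (σ i) := by
    intro i
    rw [hσ]
    simp only [Function.comp_apply, singVal]
    exact Real.sq_sqrt (hanonneg (σ i))
  have hμWnonneg : ∀ i, 0 ≤ μW i := by
    intro i; rw [hσ]; exact Real.sqrt_nonneg _
  have hanti : Antitone (a ∘ σ) := by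
    intro i j hij
    have h1 := hWdec hij
    have : μW j ^ 2 ≤ μW i ^ 2 := pow_le_pow_left₀ (hμWnonneg j) h1 2
    rwa [hsq i, hsq j] at this
  obtain ⟨U, hΩspec, hU1, hU2⟩ := real_spectral' hΩ.isHermitian
  have hinv : Ω⁻¹ = U * diagonal (fun i => (b i)⁻¹) * Uᵀ := by
    apply Matrix.inv_eq_left_inv
    rw [hΩspec]
    have : U * diagonal (fun i => (b i)⁻¹) * Uᵀ * (U * diagonal b * Uᵀ)
        = U * (diagonal (fun i => (b i)⁻¹) * (Uᵀ * U) * diagonal b) * Uᵀ := by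
      noncomm_ring
    rw [this, hU1, mul_one, diagonal_mul_diagonal]
    have : (fun i => (b i)⁻¹ * b i) = fun _ => (1:ℝ) := by
      funext i; exact inv_mul_cancel₀ (ne_of_gt (hbpos i))
    rw [this, diagonal_one, mul_one, hU2]
  set C := Uᵀ * (Wᵀ * W) * U with hC
  have htrace : (Ω⁻¹ * (Wᵀ * W)).trace = ∑ k, (b k)⁻¹ * C k k := by
    rw [hinv]
    have h1 : U * diagonal (fun i => (b i)⁻¹) * Uᵀ * (Wᵀ * W)
        = U * (diagonal (fun i => (b i)⁻¹) * (Uᵀ * (Wᵀ * W))) := by noncomm_ring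
    rw [h1, ← Matrix.trace_mul_comm]
    have h2 : diagonal (fun i => (b i)⁻¹) * (Uᵀ * (Wᵀ * W)) * U
        = diagonal (fun i => (b i)⁻¹) * C := by rw [hC]; noncomm_ring
    rw [h2, Matrix.trace]
    refine Finset.sum_congr rfl fun k _ => ?_
    simp [Matrix.diag, diagonal_mul]
  have hre : ∑ k, (b k)⁻¹ * C k k = ∑ i, (b (τ i))⁻¹ * C (τ i) (τ i) :=
    (Equiv.sum_comp τ (fun k => (b k)⁻¹ * C k k)).symm
  have hLHS : ∑ i, μW i ^ 2 / μΩ i = ∑ i, (b (τ i))⁻¹ * a (σ i) := by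
    refine Finset.sum_congr rfl fun i _ => ?_
    rw [hsq i, hτ, div_eq_mul_inv, mul_comm]
    rfl
  rw [hLHS, htrace, hre]
  -- the core inequality
  set f : Fin m → ℝ := fun i => (b (τ i))⁻¹ with hf
  set x : Fin m → ℝ := fun i => C (τ i) (τ i) - a (σ i) with hx
  have hμΩ' : ∀ i, μΩ i = b (τ i) := by intro i; rw [hτ]; rfl
  have htail : ∀ kF : Fin m,
      0 ≤ ∑ i ∈ Finset.univ.filter (fun i : Fin m => kF ≤ i), x i := by
    intro kF
    rw [Finset.sum_sub_distrib]
    rw [sub_nonneg]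
    set T := Finset.univ.filter (fun i : Fin m => kF ≤ i) with hT
    have himg : ∑ j ∈ T.image τ, C j j = ∑ i ∈ T, C (τ i) (τ i) :=
      Finset.sum_image (fun i _ j _ h => τ.injective h)
    rw [← himg, hC, ha]
    exact kyfan' hA σ (ha ▸ hanti) U hU1 hU2 (T.image τ) kF
      (Finset.card_image_of_injective T τ.injective)
  have key : 0 ≤ ∑ i, f i * x i := by
    rcases Nat.eq_zero_or_pos m with hm | hm
    · subst hm; simp
    have hm1 : m - 1 < m := by omega
    set F : ℕ → ℝ := fun n => f ⟨min n (m - 1), by omega⟩ with hF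
    set X : ℕ → ℝ := fun n => if h : n < m then x ⟨n, h⟩ else 0 with hX
    have hFmono : Monotone F := by
      intro n n' hnn'
      have hle : (⟨min n (m - 1), by omega⟩ : Fin m) ≤ ⟨min n' (m - 1), by omega⟩ := by
        simp only [Fin.mk_le_mk]
        exact min_le_min hnn' le_rfl
      show f _ ≤ f _
      rw [hf]
      have h1 : 0 < b (τ ⟨min n' (m - 1), by omega⟩) := hbpos _
      have h2 : b (τ ⟨min n' (m - 1), by omega⟩) ≤ b (τ ⟨min n (m - 1), by omega⟩) := by
        rw [← hμΩ', ← hμΩ']; exact hΩdec hle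
      exact inv_anti₀ h1 h2
    have hF0 : 0 ≤ F 0 := le_of_lt (inv_pos.2 (hbpos _))
    have heq : ∑ i, f i * x i = ∑ n ∈ Finset.range m, F n * X n := by
      rw [← Fin.sum_univ_eq_sum_range (fun n => F n * X n) m]
      refine Finset.sum_congr rfl fun i _ => ?_
      have h1 : X ↑i = x i := by
        rw [hX]; simp only [i.isLt, dif_pos, Fin.eta]
      have h2 : F ↑i = f i := by
        have harg : (⟨min (↑i : ℕ) (m - 1), by omega⟩ : Fin m) = i := by
          apply Fin.ext
          have := i.isLt
          simp only []
          omega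
        exact congrArg f harg
      rw [h1, h2]
    rw [heq]
    apply abel_nonneg' m F X hFmono hF0
    intro k hk
    have hico : Finset.filter (fun i => k ≤ i) (Finset.range m) = Finset.Ico k m := by
      ext i; simp [Finset.mem_Ico, and_comm]
    rw [← hico, Finset.sum_filter,
      ← Fin.sum_univ_eq_sum_range (fun n => if k ≤ n then X n else 0) m]
    have hcongr : ∀ i : Fin m, (if k ≤ (i : ℕ) then X ↑i else 0)
        = if (⟨k, hk⟩ : Fin m) ≤ i then x i else 0 := by
      intro i
      have h1 : X ↑i = x i := by rw [hX]; simp only [i.isLt, dif_pos, Fin.eta]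
      have h2 : ((⟨k, hk⟩ : Fin m) ≤ i) ↔ k ≤ (i : ℕ) := Iff.rfl
      rw [h1]
      by_cases h : k ≤ (i : ℕ) <;> simp [h, h2]
    rw [Finset.sum_congr rfl fun i _ => hcongr i, ← Finset.sum_filter]
    exact htail ⟨k, hk⟩
  have expand : ∑ i, f i * x i
      = (∑ i, (b (τ i))⁻¹ * C (τ i) (τ i)) - ∑ i, (b (τ i))⁻¹ * a (σ i) := by
    rw [← Finset.sum_sub_distrib]
    exact Finset.sum_congr rfl fun i _ => by rw [hf, hx]; ring
  linarith
end

section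
/- Let Φ be an m×m real symmetric matrix with spectral decomposition Φ = U·diag(κ₁, …, κₘ)·Uᵀ (U orthogonal), and let ρ > 0. Then the minimum, over all m×m real symmetric positive semidefinite matrices Ω with tr(Ω) = 1, of ρ·tr(Ω²) + tr(ΦΩ) equals the minimum, over all vectors μ ∈ ℝ^m with μᵢ ≥ 0 and Σᵢ μᵢ = 1, of ρ·‖μ‖₂² + μᵀκ; moreover, if μ* attains the latter minimum then Ω̃ = U·diag(μ*)·Uᵀ attains the former. -/
open Matrix

section Aux

variable {m : ℕ}

private lemma conj_trace {U : Matrix (Fin m) (Fin m) ℝ} (A : Matrix (Fin m) (Fin m) ℝ)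
    (hU2 : Uᵀ * U = 1) : (U * A * Uᵀ).trace = A.trace := by
  rw [Matrix.trace_mul_cycle, hU2, Matrix.one_mul]

private lemma conj_psd {U A : Matrix (Fin m) (Fin m) ℝ} (hA : A.PosSemidef) :
    (U * A * Uᵀ).PosSemidef := by
  have := hA.mul_mul_conjTranspose_same U
  rwa [Matrix.conjTranspose_eq_transpose_of_trivial] at this

private lemma conj_psd' {U A : Matrix (Fin m) (Fin m) ℝ} (hA : A.PosSemidef) :
    (Uᵀ * A * U).PosSemidef := by
  have := hA.conjTranspose_mul_mul_same U
  rwa [Matrix.conjTranspose_eq_transpose_of_trivial] at this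

private lemma trace_mul_eq (A B : Matrix (Fin m) (Fin m) ℝ) :
    (A * B).trace = ∑ i, ∑ j, A i j * B j i := by
  simp [Matrix.trace, Matrix.diag, Matrix.mul_apply]

private lemma trace_diag_mul (d : Fin m → ℝ) (A : Matrix (Fin m) (Fin m) ℝ) :
    (Matrix.diagonal d * A).trace = ∑ i, d i * A i i := by
  simp [Matrix.trace, Matrix.diag, Matrix.diagonal_mul]

/-- value of the conjugated diagonal matrix -/
private lemma value_eq {U : Matrix (Fin m) (Fin m) ℝ} {κ : Fin m → ℝ}
    {Φ : Matrix (Fin m) (Fin m) ℝ}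
    (hU1 : U * Uᵀ = 1) (hU2 : Uᵀ * U = 1)
    (hdec : Φ = U * Matrix.diagonal κ * Uᵀ) (μ : Fin m → ℝ) (ρ : ℝ) :
    ρ * ((U * Matrix.diagonal μ * Uᵀ) * (U * Matrix.diagonal μ * Uᵀ)).trace
      + (Φ * (U * Matrix.diagonal μ * Uᵀ)).trace
      = ρ * (∑ i, μ i ^ 2) + ∑ i, μ i * κ i := by
  have h : ∀ X : Matrix (Fin m) (Fin m) ℝ, Uᵀ * (U * X) = X := fun X => by
    rw [← Matrix.mul_assoc, hU2, Matrix.one_mul]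
  have h1 : (U * Matrix.diagonal μ * Uᵀ) * (U * Matrix.diagonal μ * Uᵀ)
      = U * (Matrix.diagonal μ * Matrix.diagonal μ) * Uᵀ := by
    simp only [Matrix.mul_assoc]; rw [h]
  have h2 : Φ * (U * Matrix.diagonal μ * Uᵀ)
      = U * (Matrix.diagonal κ * Matrix.diagonal μ) * Uᵀ := by
    rw [hdec]; simp only [Matrix.mul_assoc]; rw [h]
  rw [h1, h2, conj_trace _ hU2, conj_trace _ hU2, Matrix.diagonal_mul_diagonal,
    Matrix.diagonal_mul_diagonal, Matrix.trace_diagonal, Matrix.trace_diagonal]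
  have e1 : (∑ i, μ i * μ i) = ∑ i, μ i ^ 2 := Finset.sum_congr rfl fun i _ => by ring
  have e2 : (∑ i, κ i * μ i) = ∑ i, μ i * κ i := Finset.sum_congr rfl fun i _ => by ring
  rw [e1, e2]

/-- trace of conjugated diagonal matrix is the sum -/
private lemma trace_conj_diag {U : Matrix (Fin m) (Fin m) ℝ} (hU2 : Uᵀ * U = 1)
    (μ : Fin m → ℝ) : (U * Matrix.diagonal μ * Uᵀ).trace = ∑ i, μ i := by
  rw [conj_trace _ hU2, Matrix.trace_diagonal]

/-- hard direction: every feasible Ω dominates some simplex point -/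
private lemma dominate {U : Matrix (Fin m) (Fin m) ℝ} {κ : Fin m → ℝ}
    {Φ : Matrix (Fin m) (Fin m) ℝ} {ρ : ℝ} (hρ : 0 < ρ)
    (hU1 : U * Uᵀ = 1) (hU2 : Uᵀ * U = 1)
    (hdec : Φ = U * Matrix.diagonal κ * Uᵀ)
    {Ω : Matrix (Fin m) (Fin m) ℝ} (hΩ : Ω.PosSemidef) (htr : Ω.trace = 1) :
    ∃ μ : Fin m → ℝ, (∀ i, 0 ≤ μ i) ∧ (∑ i, μ i) = 1 ∧
      ρ * (∑ i, μ i ^ 2) + ∑ i, μ i * κ i ≤ ρ * (Ω * Ω).trace + (Φ * Ω).trace := by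
  set N : Matrix (Fin m) (Fin m) ℝ := Uᵀ * Ω * U with hNdef
  have hN : N.PosSemidef := conj_psd' hΩ
  have hg : ∀ X : Matrix (Fin m) (Fin m) ℝ, U * (Uᵀ * X) = X := fun X => by
    rw [← Matrix.mul_assoc, hU1, Matrix.one_mul]
  refine ⟨fun i => N i i, fun i => ?_, ?_, ?_⟩
  · simpa using hN.2 (Finsupp.single i 1)
  · have : N.trace = 1 := by
      rw [hNdef, Matrix.trace_mul_cycle, hU1, Matrix.one_mul, htr]
    simpa [Matrix.trace, Matrix.diag] using this
  · have hsym : ∀ i j, N j i = N i j := by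
      intro i j
      have := hN.1
      calc N j i = Nᴴ i j := by simp [Matrix.conjTranspose_apply]
        _ = N i j := by rw [this]
  -- linear part
    have hlin : (Φ * Ω).trace = ∑ i, N i i * κ i := by
      rw [hdec]
      calc (U * Matrix.diagonal κ * Uᵀ * Ω).trace
          = ((U * Matrix.diagonal κ) * (Uᵀ * Ω)).trace := by rw [Matrix.mul_assoc]
        _ = ((Uᵀ * Ω) * (U * Matrix.diagonal κ)).trace := Matrix.trace_mul_comm _ _
        _ = ((Uᵀ * Ω * U) * Matrix.diagonal κ).trace := by
            rw [Matrix.mul_assoc (Uᵀ * Ω) U (Matrix.diagonal κ)]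
        _ = (Matrix.diagonal κ * N).trace := Matrix.trace_mul_comm _ _
        _ = ∑ i, κ i * N i i := trace_diag_mul _ _
        _ = ∑ i, N i i * κ i := Finset.sum_congr rfl fun i _ => mul_comm _ _
  -- quadratic part
    have hNN : N * N = Uᵀ * (Ω * Ω) * U := by
      rw [hNdef]; simp [Matrix.mul_assoc, hg]
    have hq : (∑ i, N i i ^ 2) ≤ (Ω * Ω).trace := by
      have h1 : (Ω * Ω).trace = (N * N).trace := by
        rw [hNN, Matrix.trace_mul_cycle, hU1, Matrix.one_mul]
      rw [h1, trace_mul_eq]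
      refine Finset.sum_le_sum fun i _ => ?_
      have : N i i * N i i ≤ ∑ j, N i j * N j i :=
        Finset.single_le_sum (f := fun j => N i j * N j i)
          (fun j _ => by show 0 ≤ N i j * N j i; rw [hsym i j]; exact mul_self_nonneg _) (Finset.mem_univ i)
      simpa [pow_two] using this
    rw [hlin]
    have := mul_le_mul_of_nonneg_left hq hρ.le
    linarith

end Aux

/-- for symmetric Φ = U·diag(κ)·Uᵀ (U orthogonal) and ρ > 0, the minimum of
ρ·tr(Ω²) + tr(ΦΩ) over symmetric PSD Ω with tr(Ω) = 1 equals the minimum of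
ρ·‖μ‖₂² + μᵀκ over the probability simplex; moreover any simplex minimizer μ* yields a
matrix minimizer U·diag(μ*)·Uᵀ. -/
theorem stmt6 {m : ℕ} (Φ : Matrix (Fin m) (Fin m) ℝ) (hΦ : Φ.IsHermitian)
    (ρ : ℝ) (hρ : 0 < ρ)
    (U : Matrix (Fin m) (Fin m) ℝ) (κ : Fin m → ℝ)
    (hU : U * Uᵀ = 1 ∧ Uᵀ * U = 1) (hdec : Φ = U * Matrix.diagonal κ * Uᵀ) :
    sInf {v : ℝ | ∃ Ω : Matrix (Fin m) (Fin m) ℝ, Ω.PosSemidef ∧ Ω.trace = 1 ∧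
        v = ρ * (Ω * Ω).trace + (Φ * Ω).trace}
      = sInf {v : ℝ | ∃ μ : Fin m → ℝ, (∀ i, 0 ≤ μ i) ∧ (∑ i, μ i) = 1 ∧
          v = ρ * (∑ i, μ i ^ 2) + ∑ i, μ i * κ i} ∧
    ∀ μstar : Fin m → ℝ, (∀ i, 0 ≤ μstar i) → (∑ i, μstar i) = 1 →
      ρ * (∑ i, μstar i ^ 2) + (∑ i, μstar i * κ i)
        = sInf {v : ℝ | ∃ μ : Fin m → ℝ, (∀ i, 0 ≤ μ i) ∧ (∑ i, μ i) = 1 ∧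
            v = ρ * (∑ i, μ i ^ 2) + ∑ i, μ i * κ i} →
      (U * Matrix.diagonal μstar * Uᵀ).PosSemidef ∧
      (U * Matrix.diagonal μstar * Uᵀ).trace = 1 ∧
      ρ * ((U * Matrix.diagonal μstar * Uᵀ) * (U * Matrix.diagonal μstar * Uᵀ)).trace
          + (Φ * (U * Matrix.diagonal μstar * Uᵀ)).trace
        = sInf {v : ℝ | ∃ Ω : Matrix (Fin m) (Fin m) ℝ, Ω.PosSemidef ∧ Ω.trace = 1 ∧
            v = ρ * (Ω * Ω).trace + (Φ * Ω).trace} := by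
  obtain ⟨hU1, hU2⟩ := hU
  set S1 : Set ℝ := {v : ℝ | ∃ Ω : Matrix (Fin m) (Fin m) ℝ, Ω.PosSemidef ∧ Ω.trace = 1 ∧
      v = ρ * (Ω * Ω).trace + (Φ * Ω).trace} with hS1def
  set S2 : Set ℝ := {v : ℝ | ∃ μ : Fin m → ℝ, (∀ i, 0 ≤ μ i) ∧ (∑ i, μ i) = 1 ∧
      v = ρ * (∑ i, μ i ^ 2) + ∑ i, μ i * κ i} with hS2def
  -- S2 ⊆ S1
  have hsub : S2 ⊆ S1 := by
    rintro v ⟨μ, hμ0, hμ1, rfl⟩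
    refine ⟨U * Matrix.diagonal μ * Uᵀ, conj_psd (Matrix.PosSemidef.diagonal hμ0), ?_, ?_⟩
    · rw [trace_conj_diag hU2, hμ1]
    · exact (value_eq hU1 hU2 hdec μ ρ).symm
  -- domination
  have hdom : ∀ v ∈ S1, ∃ w ∈ S2, w ≤ v := by
    rintro v ⟨Ω, hΩ, htr, rfl⟩
    obtain ⟨μ, hμ0, hμ1, hle⟩ := dominate hρ hU1 hU2 hdec hΩ htr
    exact ⟨_, ⟨μ, hμ0, hμ1, rfl⟩, hle⟩
  -- lower bound
  have hlb2 : ∀ w ∈ S2, -(∑ i, |κ i|) ≤ w := by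
    rintro w ⟨μ, hμ0, hμ1, rfl⟩
    have h1 : 0 ≤ ρ * (∑ i, μ i ^ 2) :=
      mul_nonneg hρ.le (Finset.sum_nonneg fun i _ => sq_nonneg _)
    have h2 : -(∑ i, |κ i|) ≤ ∑ i, μ i * κ i := by
      rw [← Finset.sum_neg_distrib]
      refine Finset.sum_le_sum fun i _ => ?_
      have hμle : μ i ≤ 1 := by
        rw [← hμ1]
        exact Finset.single_le_sum (fun j _ => hμ0 j) (Finset.mem_univ i)
      have : -(μ i * |κ i|) ≤ μ i * κ i := by
        have := mul_le_mul_of_nonneg_left (neg_abs_le (κ i)) (hμ0 i)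
        simpa [mul_neg] using this
      refine le_trans ?_ this
      have : μ i * |κ i| ≤ 1 * |κ i| := mul_le_mul_of_nonneg_right hμle (abs_nonneg _)
      simp only [one_mul] at this
      linarith
    linarith
  have hbdd2 : BddBelow S2 := ⟨_, hlb2⟩
  have hbdd1 : BddBelow S1 := by
    refine ⟨-(∑ i, |κ i|), fun v hv => ?_⟩
    obtain ⟨w, hw, hle⟩ := hdom v hv
    exact le_trans (hlb2 w hw) hle
  have heq : sInf S1 = sInf S2 := by
    by_cases h1 : S1.Nonempty
    · obtain ⟨v, hv⟩ := h1
      obtain ⟨w, hw, _⟩ := hdom v hv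
      refine le_antisymm (csInf_le_csInf hbdd1 ⟨w, hw⟩ hsub) ?_
      refine le_csInf ⟨v, hv⟩ fun u hu => ?_
      obtain ⟨w', hw', hle'⟩ := hdom u hu
      exact (csInf_le hbdd2 hw').trans hle'
    · have h2 : S2 = ∅ := by
        rw [Set.eq_empty_iff_forall_notMem]
        exact fun w hw => h1 ⟨w, hsub hw⟩
      rw [Set.not_nonempty_iff_eq_empty] at h1
      rw [h1, h2]
  refine ⟨heq, fun μstar h0 h1 hmin => ?_⟩
  refine ⟨conj_psd (Matrix.PosSemidef.diagonal h0), by rw [trace_conj_diag hU2, h1], ?_⟩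
  rw [value_eq hU1 hU2 hdec μstar ρ, hmin, ← heq]
end
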